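/- For t ≥ 1, the unary cyclic DFA C_t with states {1,…,t+1} over alphabet {a}, transition p·a ≡ p+1 mod t+1, initial state 1, and final set {1,…,t}, is a minimal permutation automaton; hence the language L(C_t) has accepting-state complexity exactly t. -/

import Mathlib

open Fin.NatCast Fin.CommRing in
/-- The unary cyclic DFA C_t is a minimal permutation automaton with t final
states, and its language has accepting-state complexity exactly t. -/
theorem stmt_17 (t : ℕ) (ht : 1 ≤ t) :
    let δ : Fin (t + 1) → Unit → Fin (t + 1) := fun p _ => p + 1
    let F : Set (Fin (t + 1)) := {p | p.val < t}
    (∀ a : Unit, Function.Bijective fun q => δ q a) ∧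
      (∀ q : Fin (t + 1), ∃ w : List Unit, w.foldl δ 0 = q) ∧
      (∀ p q : Fin (t + 1), p ≠ q →
        ∃ w : List Unit, ¬(w.foldl δ p ∈ F ↔ w.foldl δ q ∈ F)) ∧
      F.ncard = t ∧
      (∀ (Q' : Type) [Fintype Q'] (δ' : Q' → Unit → Q') (s' : Q') (F' : Set Q'),
        {w : List Unit | w.foldl δ' s' ∈ F'} = {w : List Unit | w.foldl δ 0 ∈ F} →
        t ≤ F'.ncard) := by
  intro δ F
  have hfold : ∀ (w : List Unit) (p : Fin (t + 1)), w.foldl δ p = p + w.length := by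
    intro w
    induction w with
    | nil => simp
    | cons a w ih =>
      intro p
      simp only [List.foldl_cons, ih, List.length_cons, δ]
      push_cast
      ring
  refine ⟨?_, ?_, ?_, ?_, ?_⟩
  · intro a
    exact (Equiv.addRight (1 : Fin (t + 1))).bijective
  · intro q
    refine ⟨List.replicate q.val (), ?_⟩
    rw [hfold]
    simp [Fin.cast_val_eq_self]
  · intro p q hpq
    refine ⟨List.replicate (t - p.val) (), ?_⟩
    rw [hfold, hfold]
    have hp : p.val ≤ t := Nat.lt_succ_iff.mp p.isLt
    have h1 : (p + ((t - p.val : ℕ) : Fin (t + 1))).val = t := by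
      simp only [Fin.val_add, Fin.val_natCast]
      rw [Nat.mod_eq_of_lt (show t - p.val < t + 1 by omega),
        Nat.mod_eq_of_lt (show p.val + (t - p.val) < t + 1 by omega)]
      omega
    have h2 : q + ((t - p.val : ℕ) : Fin (t + 1)) ≠ p + ((t - p.val : ℕ) : Fin (t + 1)) := by
      intro h; exact hpq (add_right_cancel h).symm
    have h3 : (q + ((t - p.val : ℕ) : Fin (t + 1))).val < t := by
      have hlt := (q + ((t - p.val : ℕ) : Fin (t + 1))).isLt
      have hne : (q + ((t - p.val : ℕ) : Fin (t + 1))).val ≠ t := by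
        intro h
        exact h2 (Fin.ext (h.trans h1.symm))
      omega
    simp only [List.length_replicate, F, Set.mem_setOf_eq, h1]
    omega
  · have hF : F = Set.Iio (Fin.last t) := by
      ext p
      simp [F, Fin.lt_iff_val_lt_val, Fin.val_last]
    rw [hF, Set.ncard_eq_toFinset_card', Set.toFinset_Iio, Fin.card_Iio, Fin.val_last]
  · intro Q' _ δ' s' F' h
    classical
    set r : ℕ → Q' := fun n => (List.replicate n ()).foldl δ' s' with hr
    have hmem : ∀ n, r n ∈ F' ↔ n % (t + 1) < t := by
      intro n
      have hh := Set.ext_iff.mp h (List.replicate n ())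
      simp only [Set.mem_setOf_eq] at hh
      rw [hfold] at hh
      simp only [List.length_replicate] at hh
      rw [hh]
      simp [F, Fin.val_natCast]
    have hshift : ∀ m n k, r m = r n → r (m + k) = r (n + k) := by
      intro m n k hmn
      have key : ∀ j s, (List.replicate (j + k) ()).foldl δ' s
          = (List.replicate k ()).foldl δ' ((List.replicate j ()).foldl δ' s) := by
        intro j s
        rw [← List.foldl_append, ← List.replicate_add]
      simp only [hr] at hmn ⊢
      rw [key, key, hmn]
    have key : ∀ i j : Fin t, i.val < j.val → r i.val ≠ r j.val := by
      intro i j hlt hij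
      have h1 := hshift i.val j.val (t - i.val) hij
      have e1 : i.val + (t - i.val) = t := by omega
      have h2 := hmem (i.val + (t - i.val))
      have h3 := hmem (j.val + (t - i.val))
      rw [e1] at h1 h2
      rw [h1] at h2
      have hjt := j.isLt
      have e2 : (j.val + (t - i.val)) % (t + 1) = j.val - i.val - 1 := by
        have e3 : j.val + (t - i.val) = (t + 1) + (j.val - i.val - 1) := by omega
        rw [e3, Nat.add_mod_left, Nat.mod_eq_of_lt (by omega)]
      rw [e2] at h3
      rw [Nat.mod_eq_of_lt (show t < t + 1 by omega)] at h2
      exact absurd (h2.mp (h3.mpr (by omega))) (lt_irrefl t)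
    have hinj : Function.Injective (fun i : Fin t => r i.val) := by
      intro i j hij
      by_contra hne
      rcases Nat.lt_or_ge i.val j.val with hlt | hge
      · exact key i j hlt hij
      · have hlt : j.val < i.val := by
          rcases Nat.lt_or_ge j.val i.val with h' | h'
          · exact h'
          · exact absurd (Fin.ext (le_antisymm h' hge)) hne
        exact key j i hlt hij.symm
    have hmemF : ∀ i : Fin t, r i.val ∈ F' := by
      intro i
      rw [hmem, Nat.mod_eq_of_lt (by omega)]
      exact i.isLt
    have hcard : Nat.card (Fin t) ≤ Nat.card F' :=
      Nat.card_le_card_of_injective (fun i : Fin t => (⟨r i.val, hmemF i⟩ : F'))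
        (fun i j hij => hinj (congrArg Subtype.val hij))
    rwa [Nat.card_eq_fintype_card, Fintype.card_fin, Nat.card_coe_set_eq] at hcard
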